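/- Let G be an oriented graph whose vertex set is partitioned into B, C, D, and suppose every vertex x ∈ B is 'good' in the sense that deg⁻_B(x) ≤ λ|B| + εn and deg⁺_B(x) ≤ λ|B| + εn, and suppose the Ore-degree condition holds. If e(B) ≤ 2λn·m for some integer m ≥ 0, then ((3n-3)/4)(|B|(|B|−1) − e(B)) ≤ (|B|−1)Σ_{x∈B} deg(x) ≤ |B|(|B|−1)(n − |B|) + 2|B|e(B), and consequently |B| ≤ (n+3)/4 + O(λ)m. -/

import Mathlib

open Finset

/-- Out-degree of a vertex in a digraph given by an edge relation. -/
def degPlus {V : Type} [Fintype V] (E : V → V → Prop) [DecidableRel E] (x : V) : ℕ :=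
  (Finset.univ.filter fun y => E x y).card

/-- In-degree of a vertex in a digraph given by an edge relation. -/
def degMinus {V : Type} [Fintype V] (E : V → V → Prop) [DecidableRel E] (x : V) : ℕ :=
  (Finset.univ.filter fun y => E y x).card

/-- An oriented graph: no loops and no 2-cycles. -/
def Oriented {V : Type} (E : V → V → Prop) : Prop :=
  (∀ x, ¬ E x x) ∧ ∀ x y, E x y → ¬ E y x

/-- Number of edges with both endpoints in `X`. -/
def edgesIn {V : Type} [DecidableEq V] (E : V → V → Prop) [DecidableRel E] (X : Finset V) : ℕ :=
  ((X ×ˢ X).filter fun p => E p.1 p.2).card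

lemma edgesIn_eq_sum_out {V : Type} [DecidableEq V] (E : V → V → Prop) [DecidableRel E]
    (B : Finset V) : edgesIn E B = ∑ x ∈ B, (B.filter fun y => E x y).card := by
  unfold edgesIn
  rw [Finset.card_filter, Finset.sum_product]
  exact Finset.sum_congr rfl fun x _ => (Finset.card_filter _ _).symm

lemma edgesIn_eq_sum_in {V : Type} [DecidableEq V] (E : V → V → Prop) [DecidableRel E]
    (B : Finset V) : edgesIn E B = ∑ x ∈ B, (B.filter fun y => E y x).card := by
  unfold edgesIn
  rw [Finset.card_filter, Finset.sum_product, Finset.sum_comm]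
  exact Finset.sum_congr rfl fun x _ => (Finset.card_filter _ _).symm

lemma sum_deg_bound {V : Type} [Fintype V] [DecidableEq V] (E : V → V → Prop) [DecidableRel E]
    (hE : Oriented E) (B : Finset V) :
    ∑ x ∈ B, (degPlus E x + degMinus E x)
      ≤ B.card * (Fintype.card V - B.card) + 2 * edgesIn E B := by
  have key : ∀ x ∈ B, degPlus E x + degMinus E x
      ≤ ((B.filter fun y => E x y).card + (B.filter fun y => E y x).card)
        + (Fintype.card V - B.card) := by
    intro x _
    have hsplit : ∀ p : V → Prop, ∀ _ : DecidablePred p,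
        (Finset.univ.filter p).card = (B.filter p).card + (Bᶜ.filter p).card := by
      intro p _
      rw [← Finset.card_union_of_disjoint, ← Finset.filter_union, Finset.union_compl]
      exact Finset.disjoint_filter_filter disjoint_compl_right
    have h1 : degPlus E x = (B.filter fun y => E x y).card + (Bᶜ.filter fun y => E x y).card :=
      hsplit _ _
    have h2 : degMinus E x = (B.filter fun y => E y x).card + (Bᶜ.filter fun y => E y x).card :=
      hsplit _ _
    have h3 : (Bᶜ.filter fun y => E x y).card + (Bᶜ.filter fun y => E y x).card
        ≤ Fintype.card V - B.card := by
      rw [← Finset.card_union_of_disjoint]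
      · calc ((Bᶜ.filter fun y => E x y) ∪ (Bᶜ.filter fun y => E y x)).card
            ≤ Bᶜ.card := Finset.card_le_card (by
              intro y hy
              rcases Finset.mem_union.1 hy with h | h
              · exact (Finset.mem_filter.1 h).1
              · exact (Finset.mem_filter.1 h).1)
        _ = Fintype.card V - B.card := Finset.card_compl B
      · rw [Finset.disjoint_filter]
        intro y _ h1 h2
        exact hE.2 x y h1 h2
    omega
  calc ∑ x ∈ B, (degPlus E x + degMinus E x)
      ≤ ∑ x ∈ B, (((B.filter fun y => E x y).card + (B.filter fun y => E y x).card)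
        + (Fintype.card V - B.card)) := Finset.sum_le_sum key
    _ = B.card * (Fintype.card V - B.card) + 2 * edgesIn E B := by
        rw [Finset.sum_add_distrib, Finset.sum_add_distrib, Finset.sum_const,
          ← edgesIn_eq_sum_out, ← edgesIn_eq_sum_in, smul_eq_mul]
        ring

set_option maxHeartbeats 1000000 in
theorem stmt_19 :
    ∃ K : ℝ, 0 < K ∧
    ∀ (V : Type) [Fintype V] [DecidableEq V] (E : V → V → Prop) [DecidableRel E],
    ∀ n : ℕ, Fintype.card V = n → Oriented E →
    ∀ B C D : Finset V,
      Disjoint B C → Disjoint B D → Disjoint C D → B ∪ C ∪ D = Finset.univ →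
      ∀ (lam eps : ℝ) (m : ℕ), 0 ≤ lam → 0 ≤ eps →
      -- every vertex of B is `good`
      (∀ x ∈ B, ((B.filter fun y => E y x).card : ℝ) ≤ lam * B.card + eps * n ∧
        ((B.filter fun y => E x y).card : ℝ) ≤ lam * B.card + eps * n) →
      -- the Ore-degree condition
      (∀ x y : V, x ≠ y → ¬ E x y →
        ((degPlus E x : ℝ) + (degMinus E y : ℝ)) ≥ (3 * n - 3) / 4) →
      (edgesIn E B : ℝ) ≤ 2 * lam * n * m →
      ((3 * (n : ℝ) - 3) / 4 * ((B.card : ℝ) * ((B.card : ℝ) - 1) - (edgesIn E B : ℝ))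
          ≤ ((B.card : ℝ) - 1) * ∑ x ∈ B, ((degPlus E x : ℝ) + (degMinus E x : ℝ))) ∧
      (((B.card : ℝ) - 1) * ∑ x ∈ B, ((degPlus E x : ℝ) + (degMinus E x : ℝ))
          ≤ (B.card : ℝ) * ((B.card : ℝ) - 1) * ((n : ℝ) - B.card)
            + 2 * (B.card : ℝ) * (edgesIn E B : ℝ)) ∧
      (B.card : ℝ) ≤ ((n : ℝ) + 3) / 4 + K * lam * m := by
  refine ⟨176, by norm_num, ?_⟩
  intro V _ _ E _ n hn hE B C D _ _ _ _ lam eps m hlam heps _ hOre he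
  have hbn : B.card ≤ n := hn ▸ Finset.card_le_univ B
  have hbnR : (B.card : ℝ) ≤ n := by exact_mod_cast hbn
  have he0 : (0:ℝ) ≤ (edgesIn E B : ℝ) := Nat.cast_nonneg _
  -- the degree sum bound, in ℝ
  have hA : (∑ x ∈ B, ((degPlus E x : ℝ) + (degMinus E x : ℝ)))
      ≤ (B.card : ℝ) * ((n:ℝ) - B.card) + 2 * (edgesIn E B : ℝ) := by
    have := sum_deg_bound E hE B
    rw [hn] at this
    have hcast : ((∑ x ∈ B, (degPlus E x + degMinus E x) : ℕ) : ℝ)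
        ≤ ((B.card * (n - B.card) + 2 * edgesIn E B : ℕ) : ℝ) := by exact_mod_cast this
    push_cast [Nat.cast_sub hbn] at hcast
    convert hcast using 2
  -- the pair set
  set P : Finset (V × V) := B.offDiag.filter (fun p => ¬ E p.1 p.2) with hP
  have hPcard : edgesIn E B + P.card = B.card * B.card - B.card := by
    have h1 : (B.offDiag.filter (fun p => E p.1 p.2)).card + P.card = B.offDiag.card :=
      Finset.card_filter_add_card_filter_not _
    have h2 : B.offDiag.filter (fun p => E p.1 p.2) = (B ×ˢ B).filter fun p => E p.1 p.2 := by
      ext ⟨x, y⟩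
      simp only [Finset.mem_filter, Finset.mem_offDiag, Finset.mem_product]
      constructor
      · rintro ⟨⟨hx, hy, _⟩, hxy⟩; exact ⟨⟨hx, hy⟩, hxy⟩
      · rintro ⟨⟨hx, hy⟩, hxy⟩
        refine ⟨⟨hx, hy, ?_⟩, hxy⟩
        rintro rfl; exact hE.1 x hxy
    rw [h2] at h1
    rw [← Finset.offDiag_card, ← h1]
    rfl
  have hbb : B.card ≤ B.card * B.card := by
    rcases Nat.eq_zero_or_pos B.card with h | h
    · simp [h]
    · exact Nat.le_mul_of_pos_left _ h
  have hPcast : (P.card : ℝ) = (B.card : ℝ) * ((B.card : ℝ) - 1) - (edgesIn E B : ℝ) := by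
    have := congrArg (fun k : ℕ => (k : ℝ)) hPcard
    push_cast [Nat.cast_sub hbb] at this
    linarith
  -- inequality 1
  have step1 : (3 * (n : ℝ) - 3) / 4 * P.card
      ≤ ∑ p ∈ P, ((degPlus E p.1 : ℝ) + (degMinus E p.2 : ℝ)) := by
    have : ∑ _p ∈ P, (3 * (n : ℝ) - 3) / 4
        ≤ ∑ p ∈ P, ((degPlus E p.1 : ℝ) + (degMinus E p.2 : ℝ)) := by
      refine Finset.sum_le_sum ?_
      rintro ⟨x, y⟩ hp
      have := Finset.mem_filter.1 hp
      have hxy := (Finset.mem_offDiag.1 this.1).2.2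
      exact hOre x y hxy this.2
    rw [Finset.sum_const, nsmul_eq_mul] at this
    linarith
  have step2 : ∑ p ∈ P, ((degPlus E p.1 : ℝ) + (degMinus E p.2 : ℝ))
      ≤ ∑ p ∈ B.offDiag, ((degPlus E p.1 : ℝ) + (degMinus E p.2 : ℝ)) := by
    refine Finset.sum_le_sum_of_subset_of_nonneg (Finset.filter_subset _ _) ?_
    intro p _ _
    positivity
  have hdiag : B.diag = B.image fun a => (a, a) := by
    ext ⟨a₁, a₂⟩
    simp only [Finset.mem_diag, Finset.mem_image]
    constructor
    · rintro ⟨h1, rfl⟩; exact ⟨a₁, h1, rfl⟩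
    · rintro ⟨a, ha, h⟩; cases h; exact ⟨ha, rfl⟩
  have step3 : ∑ p ∈ B.offDiag, ((degPlus E p.1 : ℝ) + (degMinus E p.2 : ℝ))
      = ((B.card : ℝ) - 1) * ∑ x ∈ B, ((degPlus E x : ℝ) + (degMinus E x : ℝ)) := by
    have hsplit : ∑ p ∈ B ×ˢ B, ((degPlus E p.1 : ℝ) + (degMinus E p.2 : ℝ))
        = ∑ p ∈ B.diag, ((degPlus E p.1 : ℝ) + (degMinus E p.2 : ℝ))
          + ∑ p ∈ B.offDiag, ((degPlus E p.1 : ℝ) + (degMinus E p.2 : ℝ)) := by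
      rw [← Finset.sum_union (Finset.disjoint_diag_offDiag B), Finset.diag_union_offDiag]
    have hprod : ∑ p ∈ B ×ˢ B, ((degPlus E p.1 : ℝ) + (degMinus E p.2 : ℝ))
        = (B.card : ℝ) * (∑ x ∈ B, (degPlus E x : ℝ))
          + (B.card : ℝ) * ∑ x ∈ B, (degMinus E x : ℝ) := by
      rw [Finset.sum_product]
      have h : ∀ x ∈ B, ∑ y ∈ B, ((degPlus E x : ℝ) + (degMinus E y : ℝ))
          = (degPlus E x : ℝ) * B.card + ∑ y ∈ B, (degMinus E y : ℝ) := by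
        intro x _
        rw [Finset.sum_add_distrib, Finset.sum_const, nsmul_eq_mul, mul_comm]
      rw [Finset.sum_congr rfl h, Finset.sum_add_distrib, Finset.sum_const, nsmul_eq_mul,
        ← Finset.sum_mul]
      ring
    have hdiagsum : ∑ p ∈ B.diag, ((degPlus E p.1 : ℝ) + (degMinus E p.2 : ℝ))
        = ∑ x ∈ B, ((degPlus E x : ℝ) + (degMinus E x : ℝ)) := by
      rw [hdiag, Finset.sum_image (fun x _ y _ h => (Prod.mk.inj h).1)]
    have hsum : ∑ x ∈ B, ((degPlus E x : ℝ) + (degMinus E x : ℝ))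
        = ∑ x ∈ B, (degPlus E x : ℝ) + ∑ x ∈ B, (degMinus E x : ℝ) :=
      Finset.sum_add_distrib
    have := hsplit
    rw [hprod, hdiagsum] at this
    rw [hsum] at this ⊢
    linarith
  have ineq1 : (3 * (n : ℝ) - 3) / 4 * ((B.card : ℝ) * ((B.card : ℝ) - 1) - (edgesIn E B : ℝ))
      ≤ ((B.card : ℝ) - 1) * ∑ x ∈ B, ((degPlus E x : ℝ) + (degMinus E x : ℝ)) := by
    rw [← hPcast, ← step3]
    exact le_trans step1 step2
  have ineq2 : ((B.card : ℝ) - 1) * ∑ x ∈ B, ((degPlus E x : ℝ) + (degMinus E x : ℝ))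
      ≤ (B.card : ℝ) * ((B.card : ℝ) - 1) * ((n : ℝ) - B.card)
        + 2 * (B.card : ℝ) * (edgesIn E B : ℝ) := by
    rcases Nat.eq_zero_or_pos B.card with h | h
    · have hBempty : B = ∅ := Finset.card_eq_zero.1 h
      subst hBempty
      simp
    · have hb1 : (1:ℝ) ≤ B.card := by exact_mod_cast h
      nlinarith [mul_le_mul_of_nonneg_left hA (by linarith : (0:ℝ) ≤ (B.card : ℝ) - 1)]
  refine ⟨ineq1, ineq2, ?_⟩
  -- inequality 3
  by_cases hcase : (B.card : ℝ) ≤ ((n : ℝ) + 3) / 4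
  · have : (0:ℝ) ≤ 176 * lam * m := by positivity
    linarith
  · push_neg at hcase
    have hn0 : (0:ℝ) ≤ n := Nat.cast_nonneg _
    have hb2 : (2:ℝ) ≤ B.card := by
      rcases Nat.lt_or_ge B.card 2 with h | h
      · exfalso
        have hb1R : (B.card : ℝ) ≤ 1 := by
          exact_mod_cast Nat.lt_succ_iff.mp h
        rcases Nat.eq_zero_or_pos n with hn1 | hn1
        · have hb0 : B.card = 0 := by omega
          have hb0R : (B.card : ℝ) = 0 := by exact_mod_cast hb0
          have hn0R : (n : ℝ) = 0 := by exact_mod_cast hn1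
          linarith
        · have : (1:ℝ) ≤ n := by exact_mod_cast hn1
          linarith
      · exact_mod_cast h
    have hn2 : (2:ℝ) ≤ n := le_trans hb2 hbnR
    have hcomb : (3 * (n : ℝ) - 3) / 4 * ((B.card : ℝ) * ((B.card : ℝ) - 1) - (edgesIn E B : ℝ))
        ≤ (B.card : ℝ) * ((B.card : ℝ) - 1) * ((n : ℝ) - B.card)
          + 2 * (B.card : ℝ) * (edgesIn E B : ℝ) := le_trans ineq1 ineq2
    have h1 : (B.card : ℝ) * ((B.card : ℝ) - 1) * ((B.card : ℝ) - ((n:ℝ) + 3) / 4)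
        ≤ ((3 * (n:ℝ) - 3) / 4 + 2 * B.card) * (edgesIn E B : ℝ) := by linarith
    have h2 : ((3 * (n:ℝ) - 3) / 4 + 2 * B.card) * (edgesIn E B : ℝ)
        ≤ (11 / 2) * lam * (n:ℝ) ^ 2 * m := by
      calc ((3 * (n:ℝ) - 3) / 4 + 2 * B.card) * (edgesIn E B : ℝ)
          ≤ (11 * (n:ℝ) / 4) * (edgesIn E B : ℝ) :=
            mul_le_mul_of_nonneg_right (by linarith) he0
        _ ≤ (11 * (n:ℝ) / 4) * (2 * lam * n * m) :=
            mul_le_mul_of_nonneg_left he (by positivity)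
        _ = (11 / 2) * lam * (n:ℝ) ^ 2 * m := by ring
    have hbbR : (n:ℝ) ^ 2 / 32 ≤ (B.card : ℝ) * ((B.card : ℝ) - 1) := by
      nlinarith [mul_le_mul hcase.le hcase.le (by positivity) (by linarith : (0:ℝ) ≤ (B.card:ℝ))]
    have hpos : (0:ℝ) < (B.card : ℝ) - ((n:ℝ) + 3) / 4 := by linarith
    have h3 : ((B.card : ℝ) - ((n:ℝ) + 3) / 4) * ((n:ℝ) ^ 2 / 32)
        ≤ (11 / 2) * lam * (n:ℝ) ^ 2 * m := by
      have h4 := mul_le_mul_of_nonneg_left hbbR hpos.le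
      linarith only [h4, h1, h2]
    have hnR : (0:ℝ) < (n:ℝ) := by linarith
    have hq : (0:ℝ) < (n:ℝ) ^ 2 / 32 := by positivity
    have h5 : (11 / 2) * lam * (n:ℝ) ^ 2 * m = 176 * lam * m * ((n:ℝ) ^ 2 / 32) := by ring
    have h6 : ((B.card : ℝ) - ((n:ℝ) + 3) / 4) * ((n:ℝ) ^ 2 / 32)
        ≤ 176 * lam * m * ((n:ℝ) ^ 2 / 32) := h3.trans_eq h5
    have h7 := (mul_le_mul_iff_of_pos_right hq).mp h6
    linarith only [h7]
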